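/- (Raising operator action on little $q$-Jacobi functions.) Let $0<q<1$, $a,b \in \mathbb{C}\setminus\{0\}$ with $|ab|<1$ and $|abq|<1$, $\sigma \neq 0$, $\lambda = \frac{1}{2}(\sigma+\sigma^{-1})$. Define the operator $A(a,b)$ by $(A(a,b)f)(x) = (1 + bx/(qa)) f(x) - ab(1+x) f(qx)$. Then for $x$ in the common domain of convergence: $(A(a,b)\, \phi_\lambda(\cdot; aq, b; q))(x) = (1 - ab)\, \phi_\lambda(x; a, b; q)$, where $\phi_\lambda(x;a,b;q) = {}_2\varphi_1\!\left({a\sigma, a/\sigma \atop ab}; q, -bx/a\right)$. -/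

import Mathlib

/-- Finite q-shifted factorial `(c;q)_j`. -/
noncomputable def qP (q : ℝ) (c : ℂ) (j : ℕ) : ℂ :=
  ∏ i ∈ Finset.range j, (1 - c * (q : ℂ) ^ i)

/-- The little q-Jacobi function `φ_λ(x;a,b;q) = ₂φ₁(aσ, a/σ; ab; q, -bx/a)`. -/
noncomputable def littleqJacobi (q : ℝ) (a b σ x : ℂ) : ℂ :=
  ∑' j : ℕ, (qP q (a * σ) j * qP q (a / σ) j) /
      (qP q (q : ℂ) j * qP q (a * b) j) * (-(b * x / a)) ^ j

open Filter Topology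

noncomputable def qcoef (q : ℝ) (a b σ : ℂ) (j : ℕ) : ℂ :=
  qP q (a * σ) j * qP q (a / σ) j / (qP q (q : ℂ) j * qP q (a * b) j)

lemma littleqJacobi_eq (q : ℝ) (a b σ x : ℂ) :
    littleqJacobi q a b σ x = ∑' j : ℕ, qcoef q a b σ j * (-(b * x / a)) ^ j := rfl

lemma qP_succ (q : ℝ) (c : ℂ) (j : ℕ) :
    qP q c (j + 1) = qP q c j * (1 - c * (q : ℂ) ^ j) :=
  Finset.prod_range_succ _ _

lemma qP_shift (q : ℝ) (c : ℂ) (j : ℕ) :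
    qP q c (j + 1) = (1 - c) * qP q (c * (q : ℂ)) j := by
  rw [qP, Finset.prod_range_succ', mul_comm]
  simp only [pow_zero, mul_one]
  congr 1
  · apply Finset.prod_congr rfl
    intro i _
    rw [pow_succ]
    ring_nf

lemma one_sub_ne {q : ℝ} (hq0 : 0 < q) (hq1 : q < 1) {c : ℂ} (hc : ‖c‖ < 1) (i : ℕ) :
    (1 : ℂ) - c * (q : ℂ) ^ i ≠ 0 := by
  intro h
  have he : c * (q : ℂ) ^ i = 1 := by linear_combination -h
  have h1 : ‖c * (q : ℂ) ^ i‖ = 1 := by rw [he]; simp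
  have hq : ‖(q : ℂ)‖ = q := by
    rw [Complex.norm_real, Real.norm_of_nonneg hq0.le]
  have h2 : ‖c * (q : ℂ) ^ i‖ < 1 := by
    rw [norm_mul, norm_pow]
    calc ‖c‖ * ‖(q:ℂ)‖ ^ i ≤ ‖c‖ * 1 := by
          apply mul_le_mul_of_nonneg_left _ (norm_nonneg c)
          rw [hq]; exact pow_le_one₀ hq0.le hq1.le
      _ = ‖c‖ := mul_one _
      _ < 1 := hc
  linarith

lemma qP_ne {q : ℝ} (hq0 : 0 < q) (hq1 : q < 1) {c : ℂ} (hc : ‖c‖ < 1) (j : ℕ) :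
    qP q c j ≠ 0 :=
  Finset.prod_ne_zero_iff.mpr fun i _ => one_sub_ne hq0 hq1 hc i

lemma summable_aux {q : ℝ} (hq0 : 0 < q) (hq1 : q < 1) (α β : ℂ) {γ z : ℂ}
    (hγ : ‖γ‖ < 1) (hz : ‖z‖ < 1) :
    Summable (fun j : ℕ => qP q α j * qP q β j / (qP q (q:ℂ) j * qP q γ j) * z ^ j) := by
  have hcnorm : ‖(q:ℂ)‖ < 1 := by
    rw [Complex.norm_real, Real.norm_of_nonneg hq0.le]; exact hq1
  set c : ℂ := (q : ℂ) with hc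
  set t := fun j : ℕ => qP q α j * qP q β j / (qP q c j * qP q γ j) * z ^ j with ht
  set r := fun j : ℕ => (1 - α * c ^ j) * (1 - β * c ^ j) * z / ((1 - c * c ^ j) * (1 - γ * c ^ j)) with hr
  have hrec : ∀ j, t (j + 1) = r j * t j := by
    intro j
    have h1 := one_sub_ne hq0 hq1 hcnorm j
    have h2 := one_sub_ne hq0 hq1 hγ j
    have h3 := qP_ne hq0 hq1 hcnorm j
    have h4 := qP_ne hq0 hq1 hγ j
    simp only [ht, hr, qP_succ, pow_succ]
    field_simp
    ring
  have h0 : Tendsto (fun j : ℕ => c ^ j) atTop (𝓝 0) :=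
    tendsto_pow_atTop_nhds_zero_of_norm_lt_one hcnorm
  have hrt : Tendsto (fun j => ‖r j‖) atTop (𝓝 ‖z‖) := by
    have hlim : Tendsto r atTop (𝓝 z) := by
      have hnum : Tendsto (fun j => (1 - α * c ^ j) * (1 - β * c ^ j) * z) atTop
          (𝓝 (((1:ℂ) - α * 0) * (1 - β * 0) * z)) :=
        ((tendsto_const_nhds.sub (h0.const_mul α)).mul
          (tendsto_const_nhds.sub (h0.const_mul β))).mul tendsto_const_nhds
      have hden : Tendsto (fun j => (1 - c * c ^ j) * (1 - γ * c ^ j)) atTop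
          (𝓝 (((1:ℂ) - c * 0) * (1 - γ * 0))) :=
        (tendsto_const_nhds.sub (h0.const_mul c)).mul
          (tendsto_const_nhds.sub (h0.const_mul γ))
      have := hnum.div hden (by norm_num)
      simp only [mul_zero, sub_zero, one_mul, mul_one, div_one] at this
      exact this
    exact hlim.norm
  set s := (1 + ‖z‖) / 2 with hs
  have hs1 : s < 1 := by rw [hs]; linarith
  have hzs : ‖z‖ < s := by rw [hs]; linarith
  apply summable_of_ratio_norm_eventually_le hs1
  filter_upwards [hrt.eventually_lt_const hzs] with j hj
  rw [hrec j, norm_mul]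
  exact mul_le_mul_of_nonneg_right hj.le (norm_nonneg _)

lemma summable_qcoef {q : ℝ} (hq0 : 0 < q) (hq1 : q < 1) (a b σ : ℂ) {z : ℂ}
    (hab : ‖a * b‖ < 1) (hz : ‖z‖ < 1) :
    Summable (fun j : ℕ => qcoef q a b σ j * z ^ j) :=
  summable_aux hq0 hq1 (a * σ) (a / σ) hab hz

lemma frac_helper (N1 N2 N3 Q1 Q2 B1 B2 D C1 C2 C3 : ℂ)
    (hQ1 : Q1 ≠ 0) (hQ2 : Q2 ≠ 0) (hB1 : B1 ≠ 0) (hB2 : B2 ≠ 0) (hD : D ≠ 0)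
    (h : N1 * C1 * D - N2 * C2 * B1 * B2 * D = C3 * N3 * B2) :
    N1 / (Q1 * B1 * (Q2 * B2)) * C1 - N2 / (Q1 * Q2) * C2
      = C3 * (N3 / (Q1 * B1 * (D * Q2))) := by
  calc N1 / (Q1 * B1 * (Q2 * B2)) * C1 - N2 / (Q1 * Q2) * C2
      = (N1 * C1 * D - N2 * C2 * B1 * B2 * D) / (Q1 * B1 * Q2 * B2 * D) := by
        rw [div_mul_eq_mul_div, div_mul_eq_mul_div,
          div_sub_div _ _ (mul_ne_zero (mul_ne_zero hQ1 hB1) (mul_ne_zero hQ2 hB2))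
            (mul_ne_zero hQ1 hQ2),
          div_eq_div_iff (mul_ne_zero (mul_ne_zero (mul_ne_zero hQ1 hB1)
            (mul_ne_zero hQ2 hB2)) (mul_ne_zero hQ1 hQ2))
            (mul_ne_zero (mul_ne_zero (mul_ne_zero (mul_ne_zero hQ1 hB1) hQ2) hB2) hD)]
        ring
    _ = (C3 * N3 * B2) / (Q1 * B1 * Q2 * B2 * D) := by rw [h]
    _ = C3 * (N3 / (Q1 * B1 * (D * Q2))) := by
        rw [mul_div_assoc',
          div_eq_div_iff (mul_ne_zero (mul_ne_zero (mul_ne_zero (mul_ne_zero hQ1 hB1) hQ2) hB2) hD)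
            (mul_ne_zero (mul_ne_zero hQ1 hB1) (mul_ne_zero hD hQ2))]
        ring

lemma qcoef_key {q : ℝ} (hq0 : 0 < q) (hq1 : q < 1) (a b σ : ℂ)
    (ha : a ≠ 0) (hσ : σ ≠ 0) (hab : ‖a * b‖ < 1) (habq : ‖a * b * (q : ℂ)‖ < 1) (j : ℕ) :
    qcoef q (a * (q:ℂ)) b σ (j+1) * (1 - a * b * (q:ℂ)^(j+1))
      - qcoef q (a * (q:ℂ)) b σ j * (1 - a^2 * (q:ℂ)^(j+1))
      = (1 - a * b) * (q:ℂ)^(j+1) * qcoef q a b σ (j+1) := by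
  have hcnorm : ‖(q:ℂ)‖ < 1 := by
    rw [Complex.norm_real, Real.norm_of_nonneg hq0.le]; exact hq1
  have hQ1 : qP q (q:ℂ) j ≠ 0 := qP_ne hq0 hq1 hcnorm j
  have hQ2 : qP q (a * (q:ℂ) * b) j ≠ 0 := by
    have h5 : ‖a * (q:ℂ) * b‖ < 1 := by
      rw [show a * (q:ℂ) * b = a * b * (q:ℂ) by ring]; exact habq
    exact qP_ne hq0 hq1 h5 j
  have hB1 : (1:ℂ) - (q:ℂ) * (q:ℂ)^j ≠ 0 := one_sub_ne hq0 hq1 hcnorm j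
  have hB2 : (1:ℂ) - a * (q:ℂ) * b * (q:ℂ)^j ≠ 0 := by
    have h6 := one_sub_ne hq0 hq1 habq j
    intro h; apply h6; linear_combination h
  have h1ab : (1:ℂ) - a * b ≠ 0 := by
    have h7 := one_sub_ne hq0 hq1 hab 0
    intro h; apply h7; linear_combination h
  simp only [qcoef]
  rw [show qP q (a * σ) (j+1) = (1 - a * σ) * qP q (a * (q:ℂ) * σ) j from by
      rw [qP_shift]; ring_nf,
    show qP q (a / σ) (j+1) = (1 - a / σ) * qP q (a * (q:ℂ) / σ) j from by
      rw [qP_shift]; ring_nf,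
    show qP q (a * b) (j+1) = (1 - a * b) * qP q (a * (q:ℂ) * b) j from by
      rw [qP_shift]; ring_nf]
  simp only [qP_succ]
  exact frac_helper _ _ _ _ _ _ _ _ _ _ _ hQ1 hQ2 hB1 hB2 h1ab (by field_simp; ring)


/-- Raising operator action on little q-Jacobi functions:
with `A(a,b)f(x) = (1 + bx/(qa)) f(x) - ab(1+x) f(qx)`, one has
`A(a,b) φ_λ(·;aq,b;q) = (1-ab) φ_λ(·;a,b;q)`. -/
theorem raising_littleqJacobi (q : ℝ) (hq0 : 0 < q) (hq1 : q < 1)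
    (a b σ x : ℂ) (ha : a ≠ 0) (hb : b ≠ 0) (hσ : σ ≠ 0)
    (hab : ‖a * b‖ < 1) (habq : ‖a * b * (q : ℂ)‖ < 1)
    (h1 : ‖b * x / ((q : ℂ) * a)‖ < 1) (h2 : ‖b * x / a‖ < 1) :
    (1 + b * x / ((q : ℂ) * a)) * littleqJacobi q (a * (q : ℂ)) b σ x -
        a * b * (1 + x) * littleqJacobi q (a * (q : ℂ)) b σ ((q : ℂ) * x) =
      (1 - a * b) * littleqJacobi q a b σ x := by
  have hq0' : (q : ℂ) ≠ 0 := by exact_mod_cast hq0.ne'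
  set c : ℂ := (q : ℂ) with hcdef
  set w : ℂ := -(b * x / (a * c)) with hwdef
  set d : ℕ → ℂ := qcoef q (a * c) b σ with hd
  set e : ℕ → ℂ := qcoef q a b σ with he
  -- basic identities
  have hcw : c * w = -(b * x / a) := by
    rw [hwdef]; field_simp
  have hwnorm : ‖w‖ < 1 := by
    rw [hwdef, norm_neg, show a * c = c * a by ring]; exact h1
  have hcwnorm : ‖c * w‖ < 1 := by rw [hcw, norm_neg]; exact h2
  have habq' : ‖a * c * b‖ < 1 := by
    rw [show a * c * b = a * b * c by ring]; exact habq
  -- rewrite the three functions as sums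
  have hL1 : littleqJacobi q (a * c) b σ x = ∑' j : ℕ, d j * w ^ j := rfl
  have hL2 : littleqJacobi q (a * c) b σ (c * x) = ∑' j : ℕ, d j * (c * w) ^ j := by
    rw [littleqJacobi_eq]
    apply tsum_congr
    intro j
    congr 1
    rw [hcw]
    congr 1
    field_simp
  have hL3 : littleqJacobi q a b σ x = ∑' j : ℕ, e j * (c * w) ^ j := by
    rw [littleqJacobi_eq, hcw]
  rw [hL1, hL2, hL3]
  -- constants
  have hcon1 : 1 + b * x / (c * a) = 1 - w := by
    rw [hwdef]; field_simp; ring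
  have hcon2 : a * b * (1 + x) = a * b - a ^ 2 * c * w := by
    rw [hwdef]; field_simp; ring
  rw [hcon1, hcon2]
  -- summability
  have hdw : Summable (fun j : ℕ => d j * w ^ j) := summable_qcoef hq0 hq1 _ _ _ habq' hwnorm
  have hdcw : Summable (fun j : ℕ => d j * (c * w) ^ j) := summable_qcoef hq0 hq1 _ _ _ habq' hcwnorm
  have hecw : Summable (fun j : ℕ => e j * (c * w) ^ j) := summable_qcoef hq0 hq1 _ _ _ hab hcwnorm
  -- combine into a single tsum
  rw [← tsum_mul_left, ← tsum_mul_left, ← tsum_mul_left,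
    ← Summable.tsum_sub (hdw.mul_left _) (hdcw.mul_left _), ← sub_eq_zero,
    ← Summable.tsum_sub (((hdw.mul_left _).sub (hdcw.mul_left _))) (hecw.mul_left _)]
  -- the G and H decomposition
  set G : ℕ → ℂ := fun j => d j * w ^ j - a * b * (d j * (c * w) ^ j)
    - (1 - a * b) * (e j * (c * w) ^ j) with hG
  set H : ℕ → ℂ := fun j => a ^ 2 * (c * w) * (d j * (c * w) ^ j) - w * (d j * w ^ j) with hH
  have hGsum : Summable G := (hdw.sub (hdcw.mul_left _)).sub (hecw.mul_left _)
  have hHsum : Summable H := (hdcw.mul_left _).sub (hdw.mul_left _)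
  have hsplit : ∀ j : ℕ, (1 - w) * (d j * w ^ j) - (a * b - a ^ 2 * c * w) * (d j * (c * w) ^ j)
      - (1 - a * b) * (e j * (c * w) ^ j) = G j + H j := by
    intro j
    rw [hG, hH]
    ring
  rw [tsum_congr hsplit, Summable.tsum_add hGsum hHsum]
  -- reindex H
  set K : ℕ → ℂ := fun n => match n with | 0 => 0 | Nat.succ j => H j with hK
  have hKsum : Summable K := by
    rw [← summable_nat_add_iff 1]
    exact hHsum
  have hHK : ∑' j, H j = ∑' j, K j := by
    rw [Summable.tsum_eq_zero_add hKsum]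
    show ∑' j, H j = 0 + ∑' j, H j
    simp
  rw [hHK, ← Summable.tsum_add hGsum hKsum]
  -- show all coefficients vanish
  have hvanish : ∀ j : ℕ, G j + K j = 0 := by
    intro j
    match j with
    | 0 =>
      have hd0 : d 0 = 1 := by simp [hd, qcoef, qP]
      have he0 : e 0 = 1 := by simp [he, qcoef, qP]
      simp [hK, hG, hd0, he0]
    | Nat.succ j =>
      show G (j + 1) + H j = 0
      have key := qcoef_key hq0 hq1 a b σ ha hσ hab habq j
      rw [hG, hH]
      have expand : d (j+1) * w ^ (j+1) - a * b * (d (j+1) * (c * w) ^ (j+1))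
          - (1 - a * b) * (e (j+1) * (c * w) ^ (j+1))
          + (a ^ 2 * (c * w) * (d j * (c * w) ^ j) - w * (d j * w ^ j))
          = (d (j+1) * (1 - a * b * c ^ (j+1)) - d j * (1 - a ^ 2 * c ^ (j+1))
              - (1 - a * b) * c ^ (j+1) * e (j+1)) * w ^ (j+1) := by
        ring
      rw [expand, hd, he, key]
      ring
  rw [tsum_congr hvanish]
  simp
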